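/- Let λ̄, μ̄₁, μ̄₂, μ̄₃ ∈ ℝ with μ̄₁, μ̄₂, μ̄₃ > 0, λ̄+2μ̄₁ > 0, λ̄+2μ̄₂ > 0, λ̄+2μ̄₃ > 0 and (λ̄+2μ̄₁)(λ̄+2μ̄₃) − λ̄(λ̄+2μ̄₂) ≥ 0. For k = (k₁,k₂) ∈ ℝ² define A(k) := !![(λ̄+2μ̄₁)k₁² + μ̄₂k₂², (λ̄+μ̄₂)k₁k₂; (λ̄+μ̄₂)k₁k₂, (λ̄+2μ̄₃)k₂² + μ̄₂k₁²]. Then A(k) is positive definite for every k ≠ 0; i.e., when λ̄+2μ̄₃ > 0 no eigenvalue of the acoustic matrix vanishes in any direction. -/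

import Mathlib

open Matrix

/-- The acoustic (Christoffel) matrix of the 2D orthorombic material. -/
noncomputable def acoustic (lb mb1 mb2 mb3 : ℝ) (k : Fin 2 → ℝ) :
    Matrix (Fin 2) (Fin 2) ℝ :=
  !![(lb + 2 * mb1) * k 0 ^ 2 + mb2 * k 1 ^ 2, (lb + mb2) * k 0 * k 1;
     (lb + mb2) * k 0 * k 1, (lb + 2 * mb3) * k 1 ^ 2 + mb2 * k 0 ^ 2]

lemma quad_pos (a b c x0 x1 : ℝ) (ha : 0 < a) (hd : 0 < a * c - b ^ 2)
    (hx : x0 ≠ 0 ∨ x1 ≠ 0) :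
    0 < a * x0 ^ 2 + 2 * b * x0 * x1 + c * x1 ^ 2 := by
  have h1 : 0 < a * (a * x0 ^ 2 + 2 * b * x0 * x1 + c * x1 ^ 2) := by
    by_cases hx1 : x1 = 0
    · have hx0 : x0 ≠ 0 := by tauto
      subst hx1
      have := mul_pos (mul_pos ha ha) (sq_pos_of_ne_zero hx0)
      nlinarith [this]
    · nlinarith [sq_nonneg (a * x0 + b * x1), mul_pos hd (sq_pos_of_ne_zero hx1)]
  nlinarith [h1, ha]

theorem stmt12 (lb mb1 mb2 mb3 : ℝ)
    (hm1 : 0 < mb1) (hm2 : 0 < mb2) (hm3 : 0 < mb3)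
    (h1 : 0 < lb + 2 * mb1) (h2 : 0 < lb + 2 * mb2) (h3 : 0 < lb + 2 * mb3)
    (h4 : 0 ≤ (lb + 2 * mb1) * (lb + 2 * mb3) - lb * (lb + 2 * mb2)) :
    ∀ k : Fin 2 → ℝ, k ≠ 0 → (acoustic lb mb1 mb2 mb3 k).PosDef := by
  intro k hk
  have hk' : k 0 ≠ 0 ∨ k 1 ≠ 0 := by
    by_contra h
    push_neg at h
    apply hk
    funext i
    fin_cases i <;> simp [h.1, h.2]
  set a : ℝ := (lb + 2 * mb1) * k 0 ^ 2 + mb2 * k 1 ^ 2 with ha_def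
  set b : ℝ := (lb + mb2) * k 0 * k 1 with hb_def
  set c : ℝ := (lb + 2 * mb3) * k 1 ^ 2 + mb2 * k 0 ^ 2 with hc_def
  have ha : 0 < a := by
    rcases hk' with h | h
    · nlinarith [sq_pos_of_ne_zero h, sq_nonneg (k 1)]
    · nlinarith [sq_pos_of_ne_zero h, sq_nonneg (k 0)]
  have hd : 0 < a * c - b ^ 2 := by
    simp only [ha_def, hb_def, hc_def]
    have hE : 0 ≤ ((lb + 2 * mb1) * (lb + 2 * mb3) - lb * (lb + 2 * mb2)) *
        (k 0 ^ 2 * k 1 ^ 2) :=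
      mul_nonneg h4 (mul_nonneg (sq_nonneg _) (sq_nonneg _))
    rcases hk' with h | h
    · have t0 := sq_pos_of_ne_zero h
      have h14 : 0 < mb2 * (lb + 2 * mb1) * (k 0 ^ 2 * k 0 ^ 2) :=
        mul_pos (mul_pos hm2 h1) (mul_pos t0 t0)
      have h34 : 0 ≤ mb2 * (lb + 2 * mb3) * (k 1 ^ 2 * k 1 ^ 2) :=
        mul_nonneg (mul_nonneg hm2.le h3.le) (mul_nonneg (sq_nonneg _) (sq_nonneg _))
      nlinarith [h14, h34, hE]
    · have t1 := sq_pos_of_ne_zero h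
      have h34 : 0 < mb2 * (lb + 2 * mb3) * (k 1 ^ 2 * k 1 ^ 2) :=
        mul_pos (mul_pos hm2 h3) (mul_pos t1 t1)
      have h14 : 0 ≤ mb2 * (lb + 2 * mb1) * (k 0 ^ 2 * k 0 ^ 2) :=
        mul_nonneg (mul_nonneg hm2.le h1.le) (mul_nonneg (sq_nonneg _) (sq_nonneg _))
      nlinarith [h14, h34, hE]
  rw [Matrix.posDef_iff_dotProduct_mulVec]
  constructor
  · ext i j
    fin_cases i <;> fin_cases j <;>
      simp [acoustic, Matrix.conjTranspose_apply]
  · intro x hx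
    have hx' : x 0 ≠ 0 ∨ x 1 ≠ 0 := by
      by_contra h
      push_neg at h
      apply hx
      funext i
      fin_cases i <;> simp [h.1, h.2]
    have key := quad_pos a b c (x 0) (x 1) ha hd hx'
    have heq : star x ⬝ᵥ (acoustic lb mb1 mb2 mb3 k *ᵥ x) =
        a * x 0 ^ 2 + 2 * b * x 0 * x 1 + c * x 1 ^ 2 := by
      simp [acoustic, Matrix.mulVec, dotProduct, Fin.sum_univ_two,
        ha_def, hb_def, hc_def]
      ring
    rw [heq]
    exact key
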